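/- For any two quantum states (density operators) ρ and σ on a finite-dimensional Hilbert space, Tr(√ρ·√σ) ≥ 1 − (1/2)‖ρ − σ‖₁ ≥ 1 − √(1 − F(ρ,σ)²), where F(ρ,σ) = ‖√ρ·√σ‖₁ is the fidelity and ‖·‖₁ is the trace norm. -/

import Mathlib

open Matrix
open scoped Kronecker ComplexOrder

noncomputable section

def mfun {n : Type*} [Fintype n] [DecidableEq n] (f : ℝ → ℝ) (A : Matrix n n ℂ) : Matrix n n ℂ :=
  if h : A.IsHermitian then
    h.eigenvectorUnitary.1 * Matrix.diagonal (fun i => (f (h.eigenvalues i) : ℂ)) *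
      (star h.eigenvectorUnitary.1)
  else 0

def psqrt {n : Type*} [Fintype n] [DecidableEq n] (A : Matrix n n ℂ) : Matrix n n ℂ :=
  mfun Real.sqrt A

def mlog {n : Type*} [Fintype n] [DecidableEq n] (A : Matrix n n ℂ) : Matrix n n ℂ :=
  mfun Real.log A

def traceNorm {n : Type*} [Fintype n] [DecidableEq n] (A : Matrix n n ℂ) : ℝ :=
  ((psqrt (Aᴴ * A)).trace).re

def fid {n : Type*} [Fintype n] [DecidableEq n] (ρ σ : Matrix n n ℂ) : ℝ :=
  traceNorm (psqrt ρ * psqrt σ)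

def vNEntropy {n : Type*} [Fintype n] [DecidableEq n] (A : Matrix n n ℂ) : ℝ :=
  - ((A * mlog A).trace).re

def relEnt {n : Type*} [Fintype n] [DecidableEq n] (ρ σ : Matrix n n ℂ) : ℝ :=
  ((ρ * mlog ρ).trace - (ρ * mlog σ).trace).re


namespace FvdG

variable {n : Type*} [Fintype n] [DecidableEq n]

lemma mfun_def {A : Matrix n n ℂ} (hA : A.IsHermitian) (f : ℝ → ℝ) :
    mfun f A = hA.eigenvectorUnitary.1 *
      Matrix.diagonal (fun i => (f (hA.eigenvalues i) : ℂ)) * (star hA.eigenvectorUnitary.1) := by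
  rw [mfun, dif_pos hA]

lemma mfun_mul {A : Matrix n n ℂ} (hA : A.IsHermitian) (f g : ℝ → ℝ) :
    mfun f A * mfun g A = mfun (fun x => f x * g x) A := by
  set U := hA.eigenvectorUnitary.1 with hUdef
  have hU : star U * U = 1 := Unitary.coe_star_mul_self _
  rw [mfun_def hA f, mfun_def hA g, mfun_def hA]
  simp only [Matrix.mul_assoc]
  rw [← Matrix.mul_assoc (star U) U, hU, Matrix.one_mul,
    ← Matrix.mul_assoc (Matrix.diagonal _) (Matrix.diagonal _), Matrix.diagonal_mul_diagonal]
  congr 2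
  ext i
  push_cast
  ring

lemma mfun_trace {A : Matrix n n ℂ} (hA : A.IsHermitian) (f : ℝ → ℝ) :
    (mfun f A).trace = ∑ i, (f (hA.eigenvalues i) : ℂ) := by
  rw [mfun_def hA, Matrix.trace_mul_cycle, Unitary.coe_star_mul_self, Matrix.one_mul,
    Matrix.trace_diagonal]

lemma mfun_isHermitian {A : Matrix n n ℂ} (hA : A.IsHermitian) (f : ℝ → ℝ) :
    (mfun f A).IsHermitian := by
  rw [mfun_def hA]
  have hD : (Matrix.diagonal (fun i => (f (hA.eigenvalues i) : ℂ)))ᴴ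
      = Matrix.diagonal (fun i => (f (hA.eigenvalues i) : ℂ)) := by
    have hs : (star fun i => ((f (hA.eigenvalues i) : ℂ))) = (fun i => ((f (hA.eigenvalues i) : ℂ))) := by
      funext i
      exact Complex.conj_ofReal _
    rw [Matrix.diagonal_conjTranspose, hs]
  show (_ * _ * star _)ᴴ = _
  rw [Matrix.star_eq_conjTranspose, Matrix.conjTranspose_mul, Matrix.conjTranspose_mul,
    Matrix.conjTranspose_conjTranspose, hD, Matrix.mul_assoc]

lemma mfun_posSemidef {A : Matrix n n ℂ} (hA : A.IsHermitian) {f : ℝ → ℝ}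
    (hf : ∀ i, 0 ≤ f (hA.eigenvalues i)) : (mfun f A).PosSemidef := by
  rw [mfun_def hA]
  have hd : (Matrix.diagonal (fun i => (f (hA.eigenvalues i) : ℂ))).PosSemidef := by
    refine Matrix.posSemidef_diagonal_iff.mpr fun i => ?_
    exact_mod_cast hf i
  simpa [Matrix.star_eq_conjTranspose] using hd.mul_mul_conjTranspose_same hA.eigenvectorUnitary.1

lemma mfun_congr {A : Matrix n n ℂ} (hA : A.IsHermitian) {f g : ℝ → ℝ}
    (h : ∀ i, f (hA.eigenvalues i) = g (hA.eigenvalues i)) : mfun f A = mfun g A := by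
  rw [mfun_def hA, mfun_def hA]
  congr 2
  ext i j
  simp only [Matrix.diagonal_apply]
  rw [h]

lemma mfun_id {A : Matrix n n ℂ} (hA : A.IsHermitian) : mfun (fun x => x) A = A := by
  rw [mfun_def hA]
  exact hA.spectral_theorem.symm

lemma mfun_one {A : Matrix n n ℂ} (hA : A.IsHermitian) : mfun (fun _ => 1) A = 1 := by
  rw [mfun_def hA]
  simp only [Complex.ofReal_one]
  rw [Matrix.diagonal_one, Matrix.mul_one]
  exact Unitary.mul_star_self_of_mem hA.eigenvectorUnitary.2

lemma psqrt_posSemidef {A : Matrix n n ℂ} (hA : A.PosSemidef) : (psqrt A).PosSemidef :=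
  mfun_posSemidef hA.1 (fun _ => Real.sqrt_nonneg _)

lemma psqrt_mul_self {A : Matrix n n ℂ} (hA : A.PosSemidef) : psqrt A * psqrt A = A := by
  rw [psqrt, mfun_mul hA.1,
    mfun_congr hA.1 (g := fun x => x) (fun i => Real.mul_self_sqrt (hA.eigenvalues_nonneg i)),
    mfun_id hA.1]

lemma psqrt_unique {A B : Matrix n n ℂ} (hA : A.PosSemidef) (hB : B.PosSemidef)
    (h : B * B = A) : psqrt A = B := by
  open scoped MatrixOrder Matrix.Norms.L2Operator in
  refine (CFC.mul_self_eq_mul_self_iff _ _ (Matrix.nonneg_iff_posSemidef.mpr (psqrt_posSemidef hA))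
    (Matrix.nonneg_iff_posSemidef.mpr hB)).mp ?_
  rw [psqrt_mul_self hA, h]

lemma mul_self_herm {H : Matrix n n ℂ} (hH : H.IsHermitian) :
    H * H = mfun (fun x => x * x) H := by
  have := mfun_mul hH (fun x => x) (fun x => x)
  rwa [mfun_id hH] at this

lemma psqrt_conjTranspose_mul_self_herm {H : Matrix n n ℂ} (hH : H.IsHermitian) :
    psqrt (Hᴴ * H) = mfun (fun x => |x|) H := by
  refine psqrt_unique (Matrix.posSemidef_conjTranspose_mul_self H)
    (mfun_posSemidef hH (fun _ => abs_nonneg _)) ?_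
  rw [mfun_mul hH, mfun_congr hH (g := fun x => x * x) (fun i => abs_mul_abs_self _),
    ← mul_self_herm hH, hH.eq]

lemma traceNorm_herm {H : Matrix n n ℂ} (hH : H.IsHermitian) :
    traceNorm H = ∑ i, |hH.eigenvalues i| := by
  rw [traceNorm, psqrt, ← psqrt, psqrt_conjTranspose_mul_self_herm hH, mfun_trace hH,
    Complex.re_sum]
  simp

def msign (H : Matrix n n ℂ) : Matrix n n ℂ := mfun (fun x => if x < 0 then -1 else 1) H

lemma msign_mul_self {H : Matrix n n ℂ} (hH : H.IsHermitian) : msign H * msign H = 1 := by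
  rw [msign, mfun_mul hH, mfun_congr hH (g := fun _ => 1) ?_, mfun_one hH]
  intro i
  by_cases h : hH.eigenvalues i < 0 <;> simp [h]

lemma msign_herm {H : Matrix n n ℂ} (hH : H.IsHermitian) : (msign H).IsHermitian :=
  mfun_isHermitian hH _

lemma msign_mul {H : Matrix n n ℂ} (hH : H.IsHermitian) :
    msign H * H = mfun (fun x => |x|) H := by
  have h2 := mfun_mul hH (fun x => if x < 0 then -1 else 1) (fun x => x)
  rw [mfun_id hH] at h2
  rw [msign, h2]
  refine mfun_congr hH (fun i => ?_)
  by_cases h : hH.eigenvalues i < 0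
  · simp [h, abs_of_neg h]
  · simp [h, abs_of_nonneg (not_lt.mp h)]

lemma posSemidef_diag {M : Matrix n n ℂ} (hM : M.PosSemidef) (i : n) :
    0 ≤ (M i i).re ∧ (M i i).im = 0 := by
  have h := (Matrix.posSemidef_iff_dotProduct_mulVec.mp hM).2 (Pi.single i 1)
  have he : star (Pi.single i 1 : n → ℂ) ⬝ᵥ (M *ᵥ Pi.single i 1) = M i i := by
    simp [dotProduct, Matrix.mulVec, Pi.single_apply, apply_ite, mul_ite,
      Finset.sum_ite_eq', Finset.mul_sum]
  rw [he, Complex.le_def] at h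
  exact ⟨h.1, h.2.symm⟩

lemma herm_diag_im {M : Matrix n n ℂ} (hM : M.IsHermitian) (i : n) : (M i i).im = 0 := by
  have : ((starRingEnd ℂ) (M i i)) = M i i := congrFun (congrFun hM i) i
  have h2 := congrArg Complex.im this
  simp only [Complex.conj_im] at h2
  linarith

lemma trace_conjTranspose_mul (X Y : Matrix n n ℂ) :
    (Xᴴ * Y).trace = ∑ p, ∑ q, (starRingEnd ℂ) (X p q) * Y p q := by
  rw [Matrix.trace]
  simp only [Matrix.diag, Matrix.mul_apply, Matrix.conjTranspose_apply]
  rw [Finset.sum_comm]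
  rfl

lemma trace_conjTranspose_mul_self_re (X : Matrix n n ℂ) :
    ((Xᴴ * X).trace).re = ∑ p, ∑ q, Complex.normSq (X p q) := by
  rw [trace_conjTranspose_mul, Complex.re_sum]
  refine Finset.sum_congr rfl fun p _ => ?_
  rw [Complex.re_sum]
  refine Finset.sum_congr rfl fun q _ => ?_
  rw [mul_comm, Complex.mul_conj, Complex.ofReal_re]

lemma trace_conjTranspose_mul_self_re_nonneg (X : Matrix n n ℂ) :
    0 ≤ ((Xᴴ * X).trace).re := by
  rw [trace_conjTranspose_mul_self_re]
  refine Finset.sum_nonneg fun p _ => Finset.sum_nonneg fun q _ => Complex.normSq_nonneg _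

lemma cauchy_schwarz_trace (X Y : Matrix n n ℂ) :
    ‖(Xᴴ * Y).trace‖ ≤
      Real.sqrt (((Xᴴ * X).trace).re) * Real.sqrt (((Yᴴ * Y).trace).re) := by
  rw [trace_conjTranspose_mul, trace_conjTranspose_mul_self_re,
    trace_conjTranspose_mul_self_re]
  calc ‖∑ p, ∑ q, (starRingEnd ℂ) (X p q) * Y p q‖
      ≤ ∑ p, ∑ q, ‖X p q‖ * ‖Y p q‖ := by
        refine (norm_sum_le _ _).trans ?_
        refine Finset.sum_le_sum fun p _ => ?_
        refine (norm_sum_le _ _).trans ?_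
        refine Finset.sum_le_sum fun q _ => ?_
        rw [norm_mul, Complex.norm_conj]
    _ ≤ Real.sqrt (∑ p, ∑ q, Complex.normSq (X p q)) *
        Real.sqrt (∑ p, ∑ q, Complex.normSq (Y p q)) := by
        have hprod : ∀ f : n → n → ℝ, ∑ pq : n × n, f pq.1 pq.2 = ∑ p, ∑ q, f p q := by
          intro f
          rw [← Finset.univ_product_univ, Finset.sum_product']
        have h1 : ∀ Z : Matrix n n ℂ, ∑ p, ∑ q, Complex.normSq (Z p q)
            = ∑ pq : n × n, ‖Z pq.1 pq.2‖ ^ 2 := by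
          intro Z
          rw [hprod fun p q => ‖Z p q‖ ^ 2]
          exact Finset.sum_congr rfl fun p _ => Finset.sum_congr rfl
            fun q _ => (Complex.sq_norm _).symm
        have h2 : ∑ p, ∑ q, ‖X p q‖ * ‖Y p q‖
            = ∑ pq : n × n, ‖X pq.1 pq.2‖ * ‖Y pq.1 pq.2‖ :=
          (hprod fun p q => ‖X p q‖ * ‖Y p q‖).symm
        rw [h1, h1, h2]
        set f := fun pq : n × n => ‖X pq.1 pq.2‖ with hf
        set g := fun pq : n × n => ‖Y pq.1 pq.2‖ with hg
        have hcs := Finset.sum_mul_sq_le_sq_mul_sq Finset.univ f g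
        have hnn : 0 ≤ ∑ pq : n × n, f pq * g pq :=
          Finset.sum_nonneg fun pq _ => mul_nonneg (norm_nonneg _) (norm_nonneg _)
        calc ∑ pq : n × n, f pq * g pq
            = Real.sqrt ((∑ pq : n × n, f pq * g pq) ^ 2) := (Real.sqrt_sq hnn).symm
          _ ≤ Real.sqrt ((∑ pq : n × n, f pq ^ 2) * (∑ pq : n × n, g pq ^ 2)) :=
              Real.sqrt_le_sqrt hcs
          _ = _ := Real.sqrt_mul (Finset.sum_nonneg fun pq _ => sq_nonneg _) _

lemma polar_decomp (C : Matrix n n ℂ) :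
    ∃ W : Matrix n n ℂ, W ∈ Matrix.unitaryGroup n ℂ ∧ C = W * psqrt (Cᴴ * C) := by
  have hP : (Cᴴ * C).PosSemidef := Matrix.posSemidef_conjTranspose_mul_self C
  have hH : (Cᴴ * C).IsHermitian := hP.1
  set U : Matrix n n ℂ := hH.eigenvectorUnitary.1 with hUdef
  set d : n → ℝ := hH.eigenvalues with hddef
  have hd : ∀ i, 0 ≤ d i := hP.eigenvalues_nonneg
  have hUU : star U * U = 1 := Unitary.star_mul_self_of_mem hH.eigenvectorUnitary.2
  have hUU' : U * star U = 1 := Unitary.mul_star_self_of_mem hH.eigenvectorUnitary.2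
  have hdiag : star U * (Cᴴ * C) * U = Matrix.diagonal (fun i => (d i : ℂ)) := by
    have := hH.conjStarAlgAut_star_eigenvectorUnitary
    simpa [Unitary.conjStarAlgAut_star_apply, Function.comp_def] using this
  set M : Matrix n n ℂ := C * U with hMdef
  have hMM : Mᴴ * M = Matrix.diagonal (fun i => (d i : ℂ)) := by
    rw [hMdef, Matrix.conjTranspose_mul, ← hdiag, Matrix.star_eq_conjTranspose]
    simp only [Matrix.mul_assoc]
  have hcol : ∀ i, ∑ k, Complex.normSq (M k i) = d i := by
    intro i
    have h1 : (Mᴴ * M) i i = (d i : ℂ) := by rw [hMM]; simp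
    have h2 : (Mᴴ * M) i i = ∑ k, ((starRingEnd ℂ) (M k i) * M k i) := by
      simp [Matrix.mul_apply, Matrix.conjTranspose_apply]
    rw [h2] at h1
    have h3 := congrArg Complex.re h1
    rw [Complex.re_sum, Complex.ofReal_re] at h3
    rw [← h3]
    exact Finset.sum_congr rfl fun k _ => by rw [mul_comm, Complex.mul_conj, Complex.ofReal_re]
  have hMzero : ∀ i, d i = 0 → ∀ k, M k i = 0 := by
    intro i hi k
    have h0 : ∑ k, Complex.normSq (M k i) = 0 := by rw [hcol i, hi]
    have h1 := (Finset.sum_eq_zero_iff_of_nonneg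
      (fun k _ => Complex.normSq_nonneg (M k i))).mp h0 k (Finset.mem_univ k)
    exact Complex.normSq_eq_zero.mp h1
  set v : n → EuclideanSpace ℂ n := fun i => WithLp.toLp 2 (fun k => M k i / (Real.sqrt (d i) : ℂ)) with hvdef
  set s : Set n := {i | d i ≠ 0} with hsdef
  have hortho : Orthonormal ℂ (s.restrict v) := by
    rw [orthonormal_iff_ite]
    rintro ⟨i, hi⟩ ⟨j, hj⟩
    have hiv : (inner ℂ (v i) (v j) : ℂ) = ∑ k, (starRingEnd ℂ) (v i k) * v j k := by
      rw [PiLp.inner_apply]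
      exact Finset.sum_congr rfl fun k _ => by rw [RCLike.inner_apply, mul_comm]
    have hterm : ∀ k, (starRingEnd ℂ) (v i k) * v j k
        = ((starRingEnd ℂ) (M k i) * M k j) / ((Real.sqrt (d i) : ℂ) * (Real.sqrt (d j) : ℂ)) := by
      intro k
      show (starRingEnd ℂ) (M k i / (Real.sqrt (d i) : ℂ)) * (M k j / (Real.sqrt (d j) : ℂ)) = _
      rw [map_div₀, Complex.conj_ofReal, div_mul_div_comm]
    have hsum : (inner ℂ (v i) (v j) : ℂ)
        = (Mᴴ * M) i j / ((Real.sqrt (d i) : ℂ) * (Real.sqrt (d j) : ℂ)) := by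
      rw [hiv]
      rw [Finset.sum_congr rfl fun k _ => hterm k, ← Finset.sum_div]
      congr 1
    show (inner ℂ (v i) (v j) : ℂ) = _
    rw [hsum, hMM]
    by_cases hij : i = j
    · subst hij
      rw [Matrix.diagonal_apply_eq, if_pos rfl, ← Complex.ofReal_mul, Real.mul_self_sqrt (hd i)]
      exact div_self (Complex.ofReal_ne_zero.mpr hi)
    · rw [Matrix.diagonal_apply_ne _ hij, if_neg (by simpa [Subtype.mk_eq_mk] using hij)]
      exact zero_div _
  have hcard : Module.finrank ℂ (EuclideanSpace ℂ n) = Fintype.card n := finrank_euclideanSpace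
  obtain ⟨b, hb⟩ := hortho.exists_orthonormalBasis_extension_of_card_eq hcard
  set W' : Matrix n n ℂ := (EuclideanSpace.basisFun n ℂ).toBasis.toMatrix b with hW'def
  have hW'mem : W' ∈ Matrix.unitaryGroup n ℂ :=
    (EuclideanSpace.basisFun n ℂ).toMatrix_orthonormalBasis_mem_unitary b
  have hW'app : ∀ k i, W' k i = b i k := fun _ _ => rfl
  set Dm : Matrix n n ℂ := Matrix.diagonal (fun i => (Real.sqrt (d i) : ℂ)) with hDmdef
  have hCU : M = W' * Dm := by
    ext k i
    rw [hDmdef, Matrix.mul_diagonal]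
    by_cases hi : d i = 0
    · rw [hMzero i hi k, hi]
      simp
    · rw [hW'app, hb i hi]
      show M k i = M k i / (Real.sqrt (d i) : ℂ) * (Real.sqrt (d i) : ℂ)
      rw [div_mul_cancel₀]
      exact Complex.ofReal_ne_zero.mpr
        (ne_of_gt (Real.sqrt_pos.mpr (lt_of_le_of_ne (hd i) (Ne.symm hi))))
  have hpsq : psqrt (Cᴴ * C) = U * Dm * star U := mfun_def hH Real.sqrt
  refine ⟨W' * star U, ?_, ?_⟩
  · have h1 : W' * star W' = 1 := Matrix.mem_unitaryGroup_iff.mp hW'mem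
    refine Matrix.mem_unitaryGroup_iff.mpr ?_
    rw [Matrix.star_mul, star_star]
    calc W' * star U * (U * star W') = W' * (star U * U) * star W' := by
          simp only [Matrix.mul_assoc]
      _ = 1 := by rw [hUU, Matrix.mul_one, h1]
  · rw [hpsq]
    have e1 : (W' * star U) * (U * Dm * star U) = W' * Dm * star U := by
      simp only [Matrix.mul_assoc]
      rw [← Matrix.mul_assoc (star U) U, hUU, Matrix.one_mul]
    have e2 : W' * Dm * star U = C := by
      rw [← hCU, hMdef, Matrix.mul_assoc, hUU', Matrix.mul_one]
    exact (e1.trans e2).symm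

lemma mfun_sub {A : Matrix n n ℂ} (hA : A.IsHermitian) (f g : ℝ → ℝ) :
    mfun f A - mfun g A = mfun (fun x => f x - g x) A := by
  rw [mfun_def hA f, mfun_def hA g, mfun_def hA]
  rw [← Matrix.sub_mul, ← Matrix.mul_sub, Matrix.diagonal_sub]
  congr 2
  ext i
  push_cast
  ring

lemma mfun_add {A : Matrix n n ℂ} (hA : A.IsHermitian) (f g : ℝ → ℝ) :
    mfun f A + mfun g A = mfun (fun x => f x + g x) A := by
  rw [mfun_def hA f, mfun_def hA g, mfun_def hA]
  rw [← Matrix.add_mul, ← Matrix.mul_add, Matrix.diagonal_add]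
  congr 2
  ext i
  push_cast
  ring

lemma traceNorm_eq_trace_mfun_abs {H : Matrix n n ℂ} (hH : H.IsHermitian) :
    traceNorm H = ((mfun (fun x => |x|) H).trace).re := by
  rw [traceNorm, psqrt, ← psqrt, psqrt_conjTranspose_mul_self_herm hH]

lemma traceNorm_conjTranspose (C : Matrix n n ℂ) : traceNorm Cᴴ = traceNorm C := by
  obtain ⟨W, hW, hC⟩ := polar_decomp C
  have hSpsd : (psqrt (Cᴴ * C)).PosSemidef :=
    psqrt_posSemidef (Matrix.posSemidef_conjTranspose_mul_self C)
  set S := psqrt (Cᴴ * C) with hSdef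
  have hWW : star W * W = 1 := Unitary.star_mul_self_of_mem hW
  have hB : (W * S * star W) * (W * S * star W) = Cᴴᴴ * Cᴴ := by
    rw [Matrix.conjTranspose_conjTranspose]
    conv_rhs => rw [hC]
    rw [Matrix.conjTranspose_mul, hSpsd.1.eq, ← Matrix.star_eq_conjTranspose W]
    simp only [Matrix.mul_assoc]
    rw [← Matrix.mul_assoc (star W) W, hWW, Matrix.one_mul]
  have h2 : psqrt (Cᴴᴴ * Cᴴ) = W * S * star W :=
    psqrt_unique (Matrix.posSemidef_conjTranspose_mul_self Cᴴ)
      (by simpa [Matrix.star_eq_conjTranspose] using hSpsd.mul_mul_conjTranspose_same W) hB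
  rw [traceNorm, h2, traceNorm, ← hSdef]
  rw [Matrix.trace_mul_cycle, hWW, Matrix.one_mul]

lemma sum_diag_abs_le_traceNorm {H V : Matrix n n ℂ} (hH : H.IsHermitian)
    (hV : V ∈ Matrix.unitaryGroup n ℂ) :
    ∑ i, |((star V * H * V) i i).re| ≤ traceNorm H := by
  have hVV : V * star V = 1 := Unitary.mul_star_self_of_mem hV
  set Hp := mfun (fun x => max x 0) H with hpdef
  set Hm := mfun (fun x => max (-x) 0) H with hmdef
  have hpPSD : Hp.PosSemidef := mfun_posSemidef hH (fun i => le_max_right _ _)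
  have hmPSD : Hm.PosSemidef := mfun_posSemidef hH (fun i => le_max_right _ _)
  have hsub : Hp - Hm = H := by
    rw [hpdef, hmdef, mfun_sub hH]
    rw [mfun_congr hH (g := fun x => x) (fun i => by
      rcases le_total (hH.eigenvalues i) 0 with h | h
      · rw [max_eq_right h, max_eq_left (by linarith)]; ring
      · rw [max_eq_left h, max_eq_right (by linarith)]; ring)]
    exact mfun_id hH
  have habs : Hp + Hm = mfun (fun x => |x|) H := by
    rw [hpdef, hmdef, mfun_add hH]
    refine mfun_congr hH (fun i => ?_)
    rcases le_total (hH.eigenvalues i) 0 with h | h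
    · rw [max_eq_right h, max_eq_left (by linarith), abs_of_nonpos h]; ring
    · rw [max_eq_left h, max_eq_right (by linarith), abs_of_nonneg h]; ring
  have hdp : ∀ i, 0 ≤ ((star V * Hp * V) i i).re := fun i =>
    (posSemidef_diag (by simpa [Matrix.star_eq_conjTranspose] using
      hpPSD.conjTranspose_mul_mul_same V) i).1
  have hdm : ∀ i, 0 ≤ ((star V * Hm * V) i i).re := fun i =>
    (posSemidef_diag (by simpa [Matrix.star_eq_conjTranspose] using
      hmPSD.conjTranspose_mul_mul_same V) i).1
  have hsplit : ∀ i, ((star V * H * V) i i).re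
      = ((star V * Hp * V) i i).re - ((star V * Hm * V) i i).re := by
    intro i
    rw [← hsub, Matrix.mul_sub, Matrix.sub_mul]
    simp [Matrix.sub_apply, Complex.sub_re]
  calc ∑ i, |((star V * H * V) i i).re|
      ≤ ∑ i, (((star V * Hp * V) i i).re + ((star V * Hm * V) i i).re) := by
        refine Finset.sum_le_sum fun i _ => ?_
        rw [hsplit i]
        refine (abs_sub _ _).trans ?_
        rw [abs_of_nonneg (hdp i), abs_of_nonneg (hdm i)]
    _ = ((star V * (Hp + Hm) * V).trace).re := by
        rw [Matrix.mul_add, Matrix.add_mul, Matrix.trace_add, Complex.add_re,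
          Matrix.trace, Matrix.trace, Complex.re_sum, Complex.re_sum,
          ← Finset.sum_add_distrib]
        rfl
    _ = ((Hp + Hm).trace).re := by
        rw [Matrix.trace_mul_cycle, hVV, Matrix.one_mul]
    _ = traceNorm H := by rw [habs, traceNorm_eq_trace_mfun_abs hH]

lemma powers_stormer {ρ σ : Matrix n n ℂ} (hρ : ρ.PosSemidef) (hσ : σ.PosSemidef)
    (hρ1 : ρ.trace = 1) (hσ1 : σ.trace = 1) :
    2 - 2 * (((psqrt ρ * psqrt σ).trace).re) ≤ traceNorm (ρ - σ) := by
  set A := psqrt ρ with hAdef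
  set B := psqrt σ with hBdef
  have hA : A.PosSemidef := psqrt_posSemidef hρ
  have hB : B.PosSemidef := psqrt_posSemidef hσ
  have hA2 : A * A = ρ := psqrt_mul_self hρ
  have hB2 : B * B = σ := psqrt_mul_self hσ
  have hX : (A - B).IsHermitian := hA.1.sub hB.1
  set V := hX.eigenvectorUnitary.1 with hVdef
  set lam := hX.eigenvalues with hlamdef
  have hVmem : V ∈ Matrix.unitaryGroup n ℂ := hX.eigenvectorUnitary.2
  have hVV : star V * V = 1 := Unitary.star_mul_self_of_mem hVmem
  have hVV' : V * star V = 1 := Unitary.mul_star_self_of_mem hVmem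
  have hdiagX : star V * (A - B) * V = Matrix.diagonal (fun i => (lam i : ℂ)) := by
    have := hX.conjStarAlgAut_star_eigenvectorUnitary
    simpa [Unitary.conjStarAlgAut_star_apply, Function.comp_def] using this
  have hXV : (A - B) * V = V * Matrix.diagonal (fun i => (lam i : ℂ)) := by
    have h := congrArg (fun Z : Matrix n n ℂ => V * Z) hdiagX
    simpa only [← Matrix.mul_assoc, hVV', Matrix.one_mul] using h
  have hVX : star V * (A - B) = Matrix.diagonal (fun i => (lam i : ℂ)) * star V := by
    have h := congrArg (fun Z : Matrix n n ℂ => Z * star V) hdiagX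
    simpa only [Matrix.mul_assoc, hVV', Matrix.mul_one] using h
  have hconj : star V * ((A - B) * (A + B) + (A + B) * (A - B)) * V
      = Matrix.diagonal (fun i => (lam i : ℂ)) * (star V * (A + B) * V)
        + (star V * (A + B) * V) * Matrix.diagonal (fun i => (lam i : ℂ)) := by
    calc star V * ((A - B) * (A + B) + (A + B) * (A - B)) * V
        = (star V * (A - B)) * ((A + B) * V) + (star V * (A + B)) * ((A - B) * V) := by
          rw [Matrix.mul_add, Matrix.add_mul]
          simp only [Matrix.mul_assoc]
      _ = _ := by
          rw [hVX, hXV]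
          simp only [Matrix.mul_assoc]
  have hkey : (A - B) * (A + B) + (A + B) * (A - B) = (ρ - σ) + (ρ - σ) := by
    rw [← hA2, ← hB2]; noncomm_ring
  set N := star V * (A + B) * V with hNdef
  have hNa : ∀ i, 0 ≤ ((star V * A * V) i i).re := fun i => (posSemidef_diag
    (by simpa [Matrix.star_eq_conjTranspose] using hA.conjTranspose_mul_mul_same V) i).1
  have hNb : ∀ i, 0 ≤ ((star V * B * V) i i).re := fun i => (posSemidef_diag
    (by simpa [Matrix.star_eq_conjTranspose] using hB.conjTranspose_mul_mul_same V) i).1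
  have hNsplit : ∀ i, (N i i).re = ((star V * A * V) i i).re + ((star V * B * V) i i).re := by
    intro i
    rw [hNdef, Matrix.mul_add, Matrix.add_mul]
    simp [Matrix.add_apply]
  have hlam_eq : ∀ i, lam i = ((star V * A * V) i i).re - ((star V * B * V) i i).re := by
    intro i
    have h1 : (star V * (A - B) * V) i i = (lam i : ℂ) := by
      rw [hdiagX, Matrix.diagonal_apply_eq]
    have h2 : (star V * (A - B) * V) i i = (star V * A * V) i i - (star V * B * V) i i := by
      rw [Matrix.mul_sub, Matrix.sub_mul]
      simp [Matrix.sub_apply]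
    rw [h2] at h1
    have h3 := congrArg Complex.re h1
    simpa [Complex.sub_re, Complex.ofReal_re] using h3.symm
  have habs_le : ∀ i, |lam i| ≤ (N i i).re := by
    intro i
    rw [hNsplit i, hlam_eq i]
    exact (abs_sub _ _).trans (by rw [abs_of_nonneg (hNa i), abs_of_nonneg (hNb i)])
  have hdiagH : ∀ i, ((star V * (ρ - σ) * V) i i).re = lam i * (N i i).re := by
    intro i
    have h := hconj
    rw [hkey] at h
    have h2 : (star V * ((ρ - σ) + (ρ - σ)) * V) i i
        = (star V * (ρ - σ) * V) i i + (star V * (ρ - σ) * V) i i := by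
      rw [Matrix.mul_add, Matrix.add_mul]
      simp [Matrix.add_apply]
    have h3 : (Matrix.diagonal (fun i => (lam i : ℂ)) * N
        + N * Matrix.diagonal (fun i => (lam i : ℂ))) i i
        = (lam i : ℂ) * N i i + N i i * (lam i : ℂ) := by
      rw [Matrix.add_apply, Matrix.diagonal_mul, Matrix.mul_diagonal]
    have h4 := congrArg (fun M : Matrix n n ℂ => (M i i).re) h
    simp only [h2, h3, Complex.add_re] at h4
    have h5 : ((lam i : ℂ) * N i i).re = lam i * (N i i).re := by
      simp [Complex.re_ofReal_mul]
    have h6 : (N i i * (lam i : ℂ)).re = lam i * (N i i).re := by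
      rw [mul_comm]
      simp [Complex.re_ofReal_mul]
    rw [h5, h6] at h4
    linarith
  have hperi : ∀ i, lam i ^ 2 ≤ |((star V * (ρ - σ) * V) i i).re| := by
    intro i
    rw [hdiagH i, abs_mul]
    calc lam i ^ 2 = |lam i| * |lam i| := by rw [pow_two, ← abs_mul_abs_self]
      _ ≤ |lam i| * |(N i i).re| :=
          mul_le_mul_of_nonneg_left ((habs_le i).trans (le_abs_self _)) (abs_nonneg _)
  have hsum1 : ∑ i, lam i ^ 2 ≤ traceNorm (ρ - σ) :=
    (Finset.sum_le_sum fun i _ => hperi i).trans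
      (sum_diag_abs_le_traceNorm (hρ.1.sub hσ.1) hVmem)
  have htr1 : ((A - B) * (A - B)).trace = ∑ i, ((lam i * lam i : ℝ) : ℂ) := by
    rw [mul_self_herm hX, mfun_trace hX]
  have htr2 : (A - B) * (A - B) = ρ - A * B - B * A + σ := by
    rw [← hA2, ← hB2]; noncomm_ring
  have htr3 : (B * A).trace = star ((A * B).trace) := by
    have e : B * A = (A * B)ᴴ := by rw [Matrix.conjTranspose_mul, hA.1.eq, hB.1.eq]
    rw [e, Matrix.trace_conjTranspose]
  have hstar_re : (star ((A * B).trace)).re = ((A * B).trace).re := rfl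
  have hL : (((A - B) * (A - B)).trace).re = 2 - 2 * ((A * B).trace).re := by
    rw [htr2, Matrix.trace_add, Matrix.trace_sub, Matrix.trace_sub, hρ1, hσ1, htr3]
    simp only [Complex.add_re, Complex.sub_re, Complex.one_re, hstar_re]
    ring
  have hR : (∑ i, ((lam i * lam i : ℝ) : ℂ)).re = ∑ i, lam i ^ 2 := by
    rw [Complex.re_sum]
    exact Finset.sum_congr rfl fun i _ => by rw [Complex.ofReal_re, pow_two]
  have hfin := congrArg Complex.re htr1
  rw [hL, hR] at hfin
  linarith

lemma fuchs_van_de_graaf {ρ σ : Matrix n n ℂ} (hρ : ρ.PosSemidef) (hσ : σ.PosSemidef)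
    (hρ1 : ρ.trace = 1) (hσ1 : σ.trace = 1) :
    traceNorm (ρ - σ) ≤ 2 * Real.sqrt (1 - fid ρ σ ^ 2) := by
  set A := psqrt ρ with hAdef
  set B := psqrt σ with hBdef
  have hA : A.PosSemidef := psqrt_posSemidef hρ
  have hB : B.PosSemidef := psqrt_posSemidef hσ
  have hA2 : A * A = ρ := psqrt_mul_self hρ
  have hB2 : B * B = σ := psqrt_mul_self hσ
  have hAs : star A = A := by rw [Matrix.star_eq_conjTranspose, hA.1.eq]
  have hBs : star B = B := by rw [Matrix.star_eq_conjTranspose, hB.1.eq]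
  obtain ⟨W, hWmem, hWpolar⟩ := polar_decomp (B * A)
  set S := psqrt ((B * A)ᴴ * (B * A)) with hSdef
  have hWW : star W * W = 1 := Unitary.star_mul_self_of_mem hWmem
  have hWW' : W * star W = 1 := Unitary.mul_star_self_of_mem hWmem
  set t := ((star W * (B * A)).trace) with htdef
  set F := traceNorm (B * A) with hFdef
  have hFS : F = S.trace.re := rfl
  have htF : t.re = F := by
    have e : star W * (B * A) = S := by
      rw [hWpolar, ← Matrix.mul_assoc, hWW, Matrix.one_mul]
    rw [htdef, e, hFS]
  have hfid : fid ρ σ = F := by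
    have e0 : fid ρ σ = traceNorm (A * B) := rfl
    have e1 : A * B = (B * A)ᴴ := by
      rw [Matrix.conjTranspose_mul, hA.1.eq, hB.1.eq]
    rw [e0, e1, traceNorm_conjTranspose]
  set E := msign (ρ - σ) with hEdef
  have hρσ : (ρ - σ).IsHermitian := hρ.1.sub hσ.1
  have hEE : E * E = 1 := msign_mul_self hρσ
  have hEherm : E.IsHermitian := msign_herm hρσ
  have hT : traceNorm (ρ - σ) = ((E * (ρ - σ)).trace).re := by
    rw [traceNorm_eq_trace_mfun_abs hρσ, hEdef, msign_mul hρσ]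
  have hCS : ∀ Y Z : Matrix n n ℂ, ((E * (Y * Z)).trace).re
      ≤ Real.sqrt (((Yᴴ * Y).trace).re) * Real.sqrt (((Zᴴ * Z).trace).re) := by
    intro Y Z
    have h0 : E * (Y * Z) = ((E * Y)ᴴ)ᴴ * Z := by
      rw [Matrix.conjTranspose_conjTranspose, Matrix.mul_assoc]
    have h1 : (((E * Y)ᴴ)ᴴ * (E * Y)ᴴ).trace = (Yᴴ * Y).trace := by
      rw [Matrix.conjTranspose_conjTranspose, Matrix.conjTranspose_mul, Matrix.trace_mul_comm]
      have e : Yᴴ * Eᴴ * (E * Y) = Yᴴ * Y := by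
        rw [hEherm.eq, Matrix.mul_assoc, ← Matrix.mul_assoc E E Y, hEE, Matrix.one_mul]
      rw [e]
    calc ((E * (Y * Z)).trace).re ≤ ‖(E * (Y * Z)).trace‖ := Complex.re_le_norm _
      _ = ‖(((E * Y)ᴴ)ᴴ * Z).trace‖ := by rw [h0]
      _ ≤ Real.sqrt ((((E * Y)ᴴ)ᴴ * (E * Y)ᴴ).trace).re * Real.sqrt (((Zᴴ * Z).trace).re) :=
          cauchy_schwarz_trace _ _
      _ = _ := by rw [h1]
  have hAA : (Aᴴ * A).trace = 1 := by rw [hA.1.eq, hA2, hρ1]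
  have hBW : (B * W)ᴴ = star W * B := by
    rw [← Matrix.star_eq_conjTranspose, Matrix.star_mul, hBs]
  have hWB : (star W * B)ᴴ = B * W := by
    rw [← Matrix.star_eq_conjTranspose, Matrix.star_mul, hBs, star_star]
  have hBWBW : B * W * (star W * B) = σ := by
    rw [← Matrix.mul_assoc, Matrix.mul_assoc B W (star W), hWW', Matrix.mul_one, hB2]
  have h2 : ((B * W)ᴴ * (B * W)).trace = 1 := by
    rw [hBW, Matrix.trace_mul_comm, hBWBW, hσ1]
  have h3 : ((star W * B)ᴴ * (star W * B)).trace = 1 := by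
    rw [hWB, hBWBW, hσ1]
  have hc1 : ((B * W)ᴴ * A).trace = t := by
    rw [hBW, Matrix.mul_assoc]
  have e : (star W * (B * A))ᴴ = Aᴴ * (B * W) := by
    simp only [← Matrix.star_eq_conjTranspose, Matrix.star_mul, star_star, hAs, hBs,
      Matrix.mul_assoc]
  have hc2 : (Aᴴ * (B * W)).trace = star t := by
    rw [← e, Matrix.trace_conjTranspose, htdef]
  have hc3 : (Aᴴ * (star W * B)).trace = t := by
    rw [hA.1.eq, Matrix.trace_mul_comm, Matrix.mul_assoc]
  have hc4 : ((star W * B)ᴴ * A).trace = star t := by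
    rw [hWB, Matrix.trace_mul_cycle]
    have e2 : A * B * W = (star W * (B * A))ᴴ := by
      simp only [← Matrix.star_eq_conjTranspose, Matrix.star_mul, star_star, hAs, hBs,
        Matrix.mul_assoc]
    rw [e2, Matrix.trace_conjTranspose, htdef]
  have hexp_sub : ∀ Y Z : Matrix n n ℂ, ((Y - Z)ᴴ * (Y - Z)).trace
      = (Yᴴ * Y).trace + (Zᴴ * Z).trace - ((Yᴴ * Z).trace + (Zᴴ * Y).trace) := by
    intro Y Z
    have e' : (Y - Z)ᴴ * (Y - Z) = Yᴴ * Y + Zᴴ * Z - (Yᴴ * Z + Zᴴ * Y) := by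
      rw [Matrix.conjTranspose_sub]; noncomm_ring
    rw [e', Matrix.trace_sub, Matrix.trace_add, Matrix.trace_add]
  have hexp_add : ∀ Y Z : Matrix n n ℂ, ((Y + Z)ᴴ * (Y + Z)).trace
      = (Yᴴ * Y).trace + (Zᴴ * Z).trace + ((Yᴴ * Z).trace + (Zᴴ * Y).trace) := by
    intro Y Z
    have e' : (Y + Z)ᴴ * (Y + Z) = Yᴴ * Y + Zᴴ * Z + (Yᴴ * Z + Zᴴ * Y) := by
      rw [Matrix.conjTranspose_add]; noncomm_ring
    rw [e', Matrix.trace_add, Matrix.trace_add, Matrix.trace_add]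
  have hstar_re : (star t).re = t.re := rfl
  have r1 : (((A - B * W)ᴴ * (A - B * W)).trace).re = 2 - 2 * F := by
    rw [hexp_sub, hAA, h2, hc2, hc1]
    simp only [Complex.sub_re, Complex.add_re, Complex.one_re, hstar_re, htF]
    ring
  have r2 : (((A + star W * B)ᴴ * (A + star W * B)).trace).re = 2 + 2 * F := by
    rw [hexp_add, hAA, h3, hc3, hc4]
    simp only [Complex.add_re, Complex.one_re, hstar_re, htF]
    ring
  have r3 : (((A + B * W)ᴴ * (A + B * W)).trace).re = 2 + 2 * F := by
    rw [hexp_add, hAA, h2, hc2, hc1]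
    simp only [Complex.add_re, Complex.one_re, hstar_re, htF]
    ring
  have r4 : (((A - star W * B)ᴴ * (A - star W * B)).trace).re = 2 - 2 * F := by
    rw [hexp_sub, hAA, h3, hc3, hc4]
    simp only [Complex.sub_re, Complex.add_re, Complex.one_re, hstar_re, htF]
    ring
  have hn1 : 0 ≤ 2 - 2 * F := by
    have h := trace_conjTranspose_mul_self_re_nonneg (A - B * W)
    rwa [r1] at h
  have hn2 : 0 ≤ 2 + 2 * F := by
    have h := trace_conjTranspose_mul_self_re_nonneg (A + B * W)
    rwa [r3] at h
  have hid : (A - B * W) * (A + star W * B) + (A + B * W) * (A - star W * B)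
      = (ρ - σ) + (ρ - σ) := by
    rw [← hA2, ← hBWBW]
    noncomm_ring
  have htr : (E * (ρ - σ)).trace + (E * (ρ - σ)).trace
      = (E * ((A - B * W) * (A + star W * B))).trace
        + (E * ((A + B * W) * (A - star W * B))).trace := by
    calc (E * (ρ - σ)).trace + (E * (ρ - σ)).trace
        = (E * ((ρ - σ) + (ρ - σ))).trace := by rw [Matrix.mul_add, Matrix.trace_add]
      _ = _ := by rw [← hid, Matrix.mul_add, Matrix.trace_add]
  have hb1 := hCS (A - B * W) (A + star W * B)
  rw [r1, r2] at hb1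
  have hb2 := hCS (A + B * W) (A - star W * B)
  rw [r3, r4] at hb2
  have hre := congrArg Complex.re htr
  simp only [Complex.add_re] at hre
  have hsqrt : Real.sqrt (2 - 2 * F) * Real.sqrt (2 + 2 * F) = 2 * Real.sqrt (1 - F ^ 2) := by
    rw [← Real.sqrt_mul hn1]
    have e4 : (2 - 2 * F) * (2 + 2 * F) = 4 * (1 - F ^ 2) := by ring
    rw [e4, Real.sqrt_mul (by norm_num : (0:ℝ) ≤ 4),
      show (4:ℝ) = 2 ^ 2 by norm_num, Real.sqrt_sq (by norm_num : (0:ℝ) ≤ 2)]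
  have hbound : traceNorm (ρ - σ) + traceNorm (ρ - σ)
      ≤ 2 * Real.sqrt (1 - F ^ 2) + 2 * Real.sqrt (1 - F ^ 2) := by
    rw [hT, hre]
    calc (E * ((A - B * W) * (A + star W * B))).trace.re
        + (E * ((A + B * W) * (A - star W * B))).trace.re
        ≤ Real.sqrt (2 - 2 * F) * Real.sqrt (2 + 2 * F)
          + Real.sqrt (2 + 2 * F) * Real.sqrt (2 - 2 * F) := add_le_add hb1 hb2
      _ = 2 * Real.sqrt (1 - F ^ 2) + 2 * Real.sqrt (1 - F ^ 2) := by
          rw [mul_comm (Real.sqrt (2 + 2 * F)), hsqrt]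
  rw [hfid]
  linarith

end FvdG

/-- For density matrices ρ, σ,
`Tr(√ρ·√σ) ≥ 1 − (1/2)‖ρ − σ‖₁ ≥ 1 − √(1 − F(ρ,σ)²)`. -/
theorem stmt0 {n : Type*} [Fintype n] [DecidableEq n]
    (ρ σ : Matrix n n ℂ) (hρ : ρ.PosSemidef) (hσ : σ.PosSemidef)
    (hρ1 : ρ.trace = 1) (hσ1 : σ.trace = 1) :
    1 - traceNorm (ρ - σ) / 2 ≤ (((psqrt ρ * psqrt σ).trace)).re ∧
    1 - Real.sqrt (1 - fid ρ σ ^ 2) ≤ 1 - traceNorm (ρ - σ) / 2 := by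
  constructor
  · have h := FvdG.powers_stormer hρ hσ hρ1 hσ1
    linarith
  · have h := FvdG.fuchs_van_de_graaf hρ hσ hρ1 hσ1
    linarith
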